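/- (Carnot's Theorem.) Let h(p) = -p·log₂(p) - (1-p)·log₂(1-p) be the base-2 binary entropy, and let t₁, t₂ be reals with 0 < t₂ < t₁ < 1/2. Let Δ : ℝ → ℝ satisfy Δ(0) = 0, Δ continuous at 0, and h(t₁ - ε) + h(t₂ + Δ(ε)) = h(t₁) + h(t₂) for all ε in some neighborhood of 0. Then the efficiency (ε - Δ(ε))/ε tends, as ε → 0 through nonzero values, to 1 - T_stat(t₂)/T_stat(t₁), where T_stat(t) := 1/log₂((1-t)/t). That is, the fraction of the energy withdrawn from the hot bath that is extractable as free work by a logically reversible, energy-conserving process equals one minus the ratio of the cold to the hot statistical temperature. -/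

import Mathlib

open Filter

/-- The base-2 binary entropy function. -/
noncomputable def binEnt (p : ℝ) : ℝ :=
  -(p * Real.logb 2 p) - (1 - p) * Real.logb 2 (1 - p)

/-- The statistical temperature of a heat bath with Hamming fraction `t`. -/
noncomputable def Tstat (t : ℝ) : ℝ := 1 / Real.logb 2 ((1 - t) / t)

lemma hasDerivAt_binEnt {p : ℝ} (h0 : 0 < p) (h1 : p < 1) :
    HasDerivAt binEnt (Real.logb 2 ((1 - p) / p)) p := by
  have h1' : 0 < 1 - p := by linarith
  have hl2 : Real.log 2 ≠ 0 := Real.log_ne_zero_of_pos_of_ne_one (by norm_num) (by norm_num)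
  have d1 : HasDerivAt (fun x : ℝ => x * Real.log x) (Real.log p + 1) p := by
    have : HasDerivAt (fun x : ℝ => x * Real.log x) (1 * Real.log p + p * p⁻¹) p :=
      (hasDerivAt_id p).mul (Real.hasDerivAt_log h0.ne')
    convert this using 1
    field_simp
  have d2 : HasDerivAt (fun x : ℝ => (1 - x) * Real.log (1 - x))
      (-(Real.log (1 - p) + 1)) p := by
    have dla : HasDerivAt (fun x : ℝ => x * Real.log x) (Real.log (1 - p) + 1) (1 - p) := by
      have : HasDerivAt (fun x : ℝ => x * Real.log x) (1 * Real.log (1 - p) + (1 - p) * (1 - p)⁻¹) (1 - p) :=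
        (hasDerivAt_id (1 - p)).mul (Real.hasDerivAt_log h1'.ne')
      convert this using 1
      field_simp
    have dlin : HasDerivAt (fun x : ℝ => 1 - x) (-1) p := by
      simpa using (hasDerivAt_id p).const_sub 1
    have := dla.comp p dlin
    refine this.congr_deriv ?_
    ring
  have key : HasDerivAt (fun x : ℝ => -(x * Real.log x) - (1 - x) * Real.log (1 - x))
      (Real.log (1 - p) - Real.log p) p := by
    have := d1.neg.sub d2
    refine this.congr_deriv ?_
    ring
  have := key.div_const (Real.log 2)
  have heq : binEnt = fun x : ℝ =>
      (-(x * Real.log x) - (1 - x) * Real.log (1 - x)) / Real.log 2 := by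
    funext x
    simp [binEnt, Real.logb]
    ring
  rw [heq]
  refine this.congr_deriv ?_
  rw [Real.logb, Real.log_div h1'.ne' h0.ne']

theorem carnot_theorem (t₁ t₂ : ℝ) (ht₂0 : 0 < t₂) (ht₂₁ : t₂ < t₁) (ht₁ : t₁ < 1 / 2)
    (Δ : ℝ → ℝ) (hΔ0 : Δ 0 = 0) (hΔc : ContinuousAt Δ 0)
    (hrev : ∀ᶠ ε in nhds 0, binEnt (t₁ - ε) + binEnt (t₂ + Δ ε) = binEnt t₁ + binEnt t₂) :
    Tendsto (fun ε : ℝ => (ε - Δ ε) / ε) (nhdsWithin 0 {0}ᶜ)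
      (nhds (1 - Tstat t₂ / Tstat t₁)) := by
  have ht₂half : t₂ < 1 / 2 := lt_trans ht₂₁ ht₁
  have ht₁0 : 0 < t₁ := lt_trans ht₂0 ht₂₁
  have ht₁1 : t₁ < 1 := by linarith
  have ht₂1 : t₂ < 1 := by linarith
  set L₁ := Real.logb 2 ((1 - t₁) / t₁) with hL₁def
  set L₂ := Real.logb 2 ((1 - t₂) / t₂) with hL₂def
  have hL₁pos : 0 < L₁ := by
    apply Real.logb_pos (by norm_num)
    rw [lt_div_iff₀ ht₁0]; linarith
  have hL₂pos : 0 < L₂ := by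
    apply Real.logb_pos (by norm_num)
    rw [lt_div_iff₀ ht₂0]; linarith
  -- the slope function at t₂
  set G : ℝ → ℝ := fun y => if y = 0 then L₂ else (binEnt (t₂ + y) - binEnt t₂) / y with hGdef
  -- G tends to L₂ at 0
  have hGtendsto : Tendsto G (nhds 0) (nhds L₂) := by
    have hd₂ : HasDerivAt binEnt L₂ t₂ := hasDerivAt_binEnt ht₂0 ht₂1
    have hslope := hasDerivAt_iff_tendsto_slope.mp hd₂
    have hmap : Tendsto (fun y : ℝ => t₂ + y) (nhdsWithin 0 {0}ᶜ) (nhdsWithin t₂ {t₂}ᶜ) := by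
      apply tendsto_nhdsWithin_of_tendsto_nhds_of_eventually_within
      · have : Tendsto (fun y : ℝ => t₂ + y) (nhds 0) (nhds (t₂ + 0)) :=
          Continuous.tendsto (by continuity) 0
        simpa using this.mono_left nhdsWithin_le_nhds
      · filter_upwards [self_mem_nhdsWithin] with y hy
        simp only [Set.mem_compl_iff, Set.mem_singleton_iff] at hy ⊢
        intro h; apply hy; linarith
    have hcomp : Tendsto (fun y : ℝ => slope binEnt t₂ (t₂ + y)) (nhdsWithin 0 {0}ᶜ) (nhds L₂) :=
      hslope.comp hmap
    have hGeq : ∀ᶠ y in nhdsWithin 0 {0}ᶜ, slope binEnt t₂ (t₂ + y) = G y := by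
      filter_upwards [self_mem_nhdsWithin] with y hy
      simp only [Set.mem_compl_iff, Set.mem_singleton_iff] at hy
      simp [hGdef, slope, hy, div_eq_inv_mul]
    have hGwithin : Tendsto G (nhdsWithin 0 {0}ᶜ) (nhds L₂) :=
      hcomp.congr' hGeq
    have hG0 : G 0 = L₂ := by simp [hGdef]
    have : ContinuousWithinAt G {(0:ℝ)}ᶜ 0 := by
      rw [ContinuousWithinAt, hG0]; exact hGwithin
    exact (continuousWithinAt_compl_self.mp this).tendsto.congr (fun x => rfl) |>.mono_left le_rfl
      |>.congr (fun x => rfl) |>.mono_right (by rw [hG0])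
  -- limit of (binEnt t₁ - binEnt (t₁ - ε)) / ε
  have hB : Tendsto (fun ε : ℝ => (binEnt t₁ - binEnt (t₁ - ε)) / ε)
      (nhdsWithin 0 {0}ᶜ) (nhds L₁) := by
    have hd₁ : HasDerivAt binEnt L₁ t₁ := hasDerivAt_binEnt ht₁0 ht₁1
    have hslope := hasDerivAt_iff_tendsto_slope.mp hd₁
    have hmap : Tendsto (fun ε : ℝ => t₁ - ε) (nhdsWithin 0 {0}ᶜ) (nhdsWithin t₁ {t₁}ᶜ) := by
      apply tendsto_nhdsWithin_of_tendsto_nhds_of_eventually_within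
      · have : Tendsto (fun y : ℝ => t₁ - y) (nhds 0) (nhds (t₁ - 0)) :=
          Continuous.tendsto (by continuity) 0
        simpa using this.mono_left nhdsWithin_le_nhds
      · filter_upwards [self_mem_nhdsWithin] with y hy
        simp only [Set.mem_compl_iff, Set.mem_singleton_iff] at hy ⊢
        intro h; apply hy; linarith
    have hcomp := hslope.comp hmap
    refine hcomp.congr' ?_
    filter_upwards [self_mem_nhdsWithin] with ε hε
    simp only [Set.mem_compl_iff, Set.mem_singleton_iff] at hε
    simp only [slope, Function.comp, sub_sub_cancel_left, smul_eq_mul, vsub_eq_sub]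
    ring
  -- Δ tends to 0 within punctured nhds
  have hΔtendsto : Tendsto Δ (nhdsWithin 0 {0}ᶜ) (nhds 0) := by
    have := hΔc.tendsto
    rw [hΔ0] at this
    exact this.mono_left nhdsWithin_le_nhds
  have hGΔ : Tendsto (fun ε => G (Δ ε)) (nhdsWithin 0 {0}ᶜ) (nhds L₂) :=
    hGtendsto.comp hΔtendsto
  -- key identity
  have hkey : ∀ᶠ ε in nhdsWithin 0 {0}ᶜ, G (Δ ε) * Δ ε = binEnt t₁ - binEnt (t₁ - ε) := by
    filter_upwards [nhdsWithin_le_nhds hrev] with ε hε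
    by_cases h : Δ ε = 0
    · rw [h] at hε ⊢
      simp only [add_zero] at hε
      simp only [mul_zero]
      linarith
    · simp only [hGdef, if_neg h]
      rw [div_mul_cancel₀ _ h]
      linarith
  -- eventually G (Δ ε) ≠ 0
  have hGne : ∀ᶠ ε in nhdsWithin 0 {0}ᶜ, G (Δ ε) ≠ 0 := by
    have : ∀ᶠ ε in nhdsWithin 0 {0}ᶜ, G (Δ ε) ∈ Set.Ioi (0:ℝ) :=
      hGΔ (Ioi_mem_nhds hL₂pos)
    filter_upwards [this] with ε hε
    exact ne_of_gt hε
  -- Δ ε / ε tends to L₁ / L₂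
  have hratio : Tendsto (fun ε => Δ ε / ε) (nhdsWithin 0 {0}ᶜ) (nhds (L₁ / L₂)) := by
    have h1 : Tendsto (fun ε => ((binEnt t₁ - binEnt (t₁ - ε)) / ε) / G (Δ ε))
        (nhdsWithin 0 {0}ᶜ) (nhds (L₁ / L₂)) := hB.div hGΔ hL₂pos.ne'
    refine h1.congr' ?_
    filter_upwards [hkey, hGne, self_mem_nhdsWithin] with ε hk hne hε
    simp only [Set.mem_compl_iff, Set.mem_singleton_iff] at hε
    rw [← hk]
    field_simp
  -- conclude
  have hfinal : Tendsto (fun ε : ℝ => (ε - Δ ε) / ε) (nhdsWithin 0 {0}ᶜ)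
      (nhds (1 - L₁ / L₂)) := by
    have := (tendsto_const_nhds (x := (1:ℝ))).sub hratio
    refine this.congr' ?_
    filter_upwards [self_mem_nhdsWithin] with ε hε
    simp only [Set.mem_compl_iff, Set.mem_singleton_iff] at hε
    field_simp
  convert hfinal using 2
  rw [Tstat, Tstat, ← hL₁def, ← hL₂def]
  rw [div_div_div_comm, one_div_one]
  rw [div_div_eq_mul_div, one_mul]
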